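/- Let F̂ : K × K → 𝔸 be a normalized 2-cocycle. Define u(k₁,k₂,k₃) ∈ Map(K,ℂˣ) by u(k₁,k₂,k₃)(x) := F̂(k₁,k₂)(F(k₃,x)), and φ∘F̂ ∈ C²(K, C¹(G,Map(K,ℂˣ))) by (φ∘F̂)(k₁,k₂)(x;g) := F̂(k₁,k₂)(κ_{x,g}). Then for all k₁,k₂,k₃,k₄,x,x₁,x₂ ∈ K and a₂ ∈ A: (i) δ_K(φ∘F̂)(k₁,k₂,k₃)(x₁;(a₂,x₂)) = F̂(k₁,k₂)(F(k₃,x₁)·F(k₃,x₁x₂)⁻¹); (ii) δ_G(u(k₁,k₂,k₃))(x₁;(a₂,x₂)) = F̂(k₁,k₂)(F(k₃,x₁x₂)·F(k₃,x₁)⁻¹), so that δ_K(φ∘F̂) · (δ_G ∘ u) = 1; and (iii) (δ_K u)(k₁,k₂,k₃,k₄)(x) = F̂(k₁,k₂)(F(k₃,k₄)), independent of x. (This computes the second differential d₂ : E₂^{2,1} → E₂^{4,0} of the Lyndon–Hochschild–Serre spectral sequence as [F̂] ↦ [(F̂ ∧ F)⁻¹], where (F̂ ∧ F)(k₁,k₂,k₃,k₄)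 := F̂(k₁,k₂)(F(k₃,k₄)).) -/

import Mathlib

open scoped BigOperators

section Defs

variable {A K : Type*} [CommGroup A] [Group K] [MulDistribMulAction K A]

/-- The product of the twisted (semidirect) product `G = A ⋊_F K`:
`(a₁,k₁)·(a₂,k₂) = (a₁ · ᵏ¹a₂ · F(k₁,k₂), k₁k₂)`. -/
def sdMul (F : K → K → A) (g₁ g₂ : A × K) : A × K :=
  (g₁.1 * g₁.2 • g₂.1 * F g₁.2 g₂.2, g₁.2 * g₂.2)

/-- The right action of `G = A ⋊_F K` on `K`:  `x ◁ (a,k) = x * k`. -/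
def sdAct (x : K) (g : A × K) : K := x * g.2

/-- `κ : K × G → A`, `κ_{x,(a,k)} = ˣa · F(x,k)`. -/
def kap (F : K → K → A) (x : K) (g : A × K) : A := x • g.1 * F x g.2

/-- Underlying type of the group of cochains `C^q(G, Map(K,ℂˣ))`. -/
abbrev Cq (A K : Type*) (q : ℕ) := K → (Fin q → A × K) → ℂˣ

/-- Normalization condition for cochains in `C^q(G, Map(K,ℂˣ))`:
`f(x; g₁,…,g_q) = 1` whenever some `gᵢ = 1`. -/
def NormG {q : ℕ} (f : Cq A K q) : Prop :=
  ∀ x g, (∃ i, g i = ((1 : A), (1 : K))) → f x g = 1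

/-- The differential `δ_G : C^q(G, Map(K,ℂˣ)) → C^{q+1}(G, Map(K,ℂˣ))`. -/
def deltaG (F : K → K → A) {q : ℕ} (f : Cq A K q) : Cq A K (q + 1) := fun x g =>
  f (sdAct x (g 0)) (Fin.tail g) *
    ∏ i : Fin (q + 1), f x (Fin.contractNth i (sdMul F) g) ^ ((-1 : ℤ) ^ ((i : ℕ) + 1))

/-- Underlying type of the group of cochains `C^q(A, ℂˣ)`. -/
abbrev CqA (A : Type*) (q : ℕ) := (Fin q → A) → ℂˣ

/-- Normalization condition for cochains in `C^q(A, ℂˣ)`. -/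
def NormA {q : ℕ} (α : CqA A q) : Prop := ∀ a, (∃ i, a i = 1) → α a = 1

/-- The differential `δ_A` on `C^*(A, ℂˣ)` (trivial `A`-action on `ℂˣ`). -/
def deltaA {q : ℕ} (α : CqA A q) : CqA A (q + 1) := fun a =>
  α (Fin.tail a) *
    ∏ i : Fin (q + 1), α (Fin.contractNth i (· * ·) a) ^ ((-1 : ℤ) ^ ((i : ℕ) + 1))

/-- The restriction map `ψ : C^q(G, Map(K,ℂˣ)) → C^q(A, ℂˣ)`,
`ψ(f)(a₁,…,a_q) = f(1; (a₁,1),…,(a_q,1))`. -/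
def psiA {q : ℕ} (f : Cq A K q) : CqA A q := fun a => f 1 fun i => (a i, 1)

/-- The map `φ : C^q(A, ℂˣ) → C^q(G, Map(K,ℂˣ))`,
`φ(α)(x; g₁,…,g_q) = α(κ_{x,g₁}, κ_{x◁g₁,g₂}, …, κ_{x◁g₁⋯g_{q-1},g_q})`. -/
def phiA (F : K → K → A) {q : ℕ} (α : CqA A q) : Cq A K q := fun x g =>
  α fun i => kap F (x * ((List.ofFn fun j => (g j).2).take (i : ℕ)).prod) (g i)

/-- The right `K`-action `f ◁ k` on `C^q(G, Map(K,ℂˣ))`: `(f ◁ k)(x; g) = f(kx; g)`. -/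
def rAct {q : ℕ} (f : Cq A K q) (k : K) : Cq A K q := fun x g => f (k * x) g

/-- Underlying type of `C^p(K, C^q(G, Map(K,ℂˣ)))`. -/
abbrev Cpq (A K : Type*) (p q : ℕ) := (Fin p → K) → Cq A K q

/-- Normalization in the `K`-variables. -/
def NormK {p q : ℕ} (h : Cpq A K p q) : Prop := ∀ k, (∃ i, k i = 1) → h k = 1

/-- The differential `δ_K : C^p(K, C^q(G,Map(K,ℂˣ))) → C^{p+1}(K, C^q(G,Map(K,ℂˣ)))`. -/
def deltaK {p q : ℕ} (h : Cpq A K p q) : Cpq A K (p + 1) q := fun k =>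
  h (Fin.tail k) *
    (∏ i : Fin p, h (Fin.contractNth i.castSucc (· * ·) k) ^ ((-1 : ℤ) ^ ((i : ℕ) + 1))) *
    rAct (h (Fin.init k)) (k (Fin.last p)) ^ ((-1 : ℤ) ^ (p + 1))

end Defs

/-- `φ∘F̂ ∈ C²(K, C¹(G,Map(K,ℂˣ)))`, `(φ∘F̂)(k₁,k₂)(x;g) = F̂(k₁,k₂)(κ_{x,g})`. -/
def phiF2 {A K : Type*} [CommGroup A] [Group K] [MulDistribMulAction K A]
    (F : K → K → A) (Fh : K → K → A →* ℂˣ) : Cpq A K 2 1 :=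
  fun k x g => Fh (k 0) (k 1) (kap F x (g 0))

/-- `u ∈ C³(K, C⁰(G,Map(K,ℂˣ)))`, `u(k₁,k₂,k₃)(x) = F̂(k₁,k₂)(F(k₃,x))`. -/
def uC3 {A K : Type*} [CommGroup A] (F : K → K → A) (Fh : K → K → A →* ℂˣ) : Cpq A K 3 0 :=
  fun k x _ => Fh (k 0) (k 1) (F (k 2) x)

/-- The computation of the second differential
`d₂ : E₂^{2,1} → E₂^{4,0}` of the LHS spectral sequence: `[F̂] ↦ [(F̂ ∧ F)⁻¹]`. -/
private lemma part1 {A K : Type*} [CommGroup A] [Group K] [MulDistribMulAction K A]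
    (F : K → K → A) (Fh : K → K → A →* ℂˣ)
    (hF : ∀ k₁ k₂ k₃ : K, k₁ • F k₂ k₃ * F k₁ (k₂ * k₃) = F (k₁ * k₂) k₃ * F k₁ k₂)
    (hFh : ∀ (k₁ k₂ k₃ : K) (a : A),
      Fh k₂ k₃ a * Fh k₁ (k₂ * k₃) a = Fh (k₁ * k₂) k₃ a * Fh k₁ k₂ (k₃ • a))
    (k : Fin 3 → K) (x₁ x₂ : K) (a₂ : A) :
      deltaK (phiF2 F Fh) k x₁ (fun _ => (a₂, x₂)) =
        Fh (k 0) (k 1) (F (k 2) x₁ * (F (k 2) (x₁ * x₂))⁻¹) := by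
  simp [-map_mul, -map_inv, deltaK, phiF2, rAct, Fin.contractNth, Fin.tail, Fin.init, kap,
    Fin.prod_univ_two, sdAct, Fin.last]
  have h2 : (k 2) • (x₁ • a₂ * F x₁ x₂) =
      ((k 2 * x₁) • a₂ * F (k 2 * x₁) x₂) * (F (k 2) x₁ * (F (k 2) (x₁ * x₂))⁻¹) := by
    have h3 := hF (k 2) x₁ x₂
    rw [smul_mul', smul_smul, eq_mul_inv_of_mul_eq h3]
    simp [mul_assoc, mul_comm, mul_left_comm]
  have h1 := hFh (k 0) (k 1) (k 2) (x₁ • a₂ * F x₁ x₂)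
  rw [h2, map_mul (Fh (k 0) (k 1))] at h1
  rw [Units.ext_iff] at h1 ⊢
  push_cast at h1 ⊢
  field_simp at h1 ⊢
  linear_combination h1

private lemma part2 {A K : Type*} [CommGroup A] [Group K] [MulDistribMulAction K A]
    (F : K → K → A) (Fh : K → K → A →* ℂˣ)
    (k : Fin 3 → K) (x₁ x₂ : K) (a₂ : A) :
      deltaG F (uC3 F Fh k) x₁ (fun _ => (a₂, x₂)) =
        Fh (k 0) (k 1) (F (k 2) (x₁ * x₂) * (F (k 2) x₁)⁻¹) := by
  simp [-map_mul, -map_inv, deltaG, uC3, sdAct, Fin.tail, Fin.prod_univ_one,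
    Fin.contractNth, map_mul, map_inv]

private lemma part4 {A K : Type*} [CommGroup A] [Group K] [MulDistribMulAction K A]
    (F : K → K → A) (Fh : K → K → A →* ℂˣ)
    (hF : ∀ k₁ k₂ k₃ : K, k₁ • F k₂ k₃ * F k₁ (k₂ * k₃) = F (k₁ * k₂) k₃ * F k₁ k₂)
    (hFh : ∀ (k₁ k₂ k₃ : K) (a : A),
      Fh k₂ k₃ a * Fh k₁ (k₂ * k₃) a = Fh (k₁ * k₂) k₃ a * Fh k₁ k₂ (k₃ • a))
    (k : Fin 4 → K) (x : K) (e : Fin 0 → A × K) :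
      deltaK (uC3 F Fh) k x e = Fh (k 0) (k 1) (F (k 2) (k 3)) := by
  simp [-map_mul, -map_inv, deltaK, uC3, rAct, Fin.contractNth, Fin.tail, Fin.init,
    Fin.prod_univ_three, Fin.last]
  have h2 : (k 2) • F (k 3) x =
      F (k 2 * k 3) x * (F (k 2) (k 3 * x))⁻¹ * F (k 2) (k 3) := by
    have h3 := hF (k 2) (k 3) x
    rw [eq_mul_inv_of_mul_eq h3]
    simp [mul_assoc, mul_comm, mul_left_comm]
  have h1 := hFh (k 0) (k 1) (k 2) (F (k 3) x)
  rw [h2, map_mul, map_mul, map_inv] at h1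
  rw [Units.ext_iff] at h1 ⊢
  push_cast at h1 ⊢
  field_simp at h1 ⊢
  linear_combination h1
theorem statement8 {A K : Type*} [CommGroup A] [Group K] [Finite A] [Finite K]
    [MulDistribMulAction K A]
    (F : K → K → A)
    (hFn : ∀ k : K, F 1 k = 1 ∧ F k 1 = 1)
    (hF : ∀ k₁ k₂ k₃ : K, k₁ • F k₂ k₃ * F k₁ (k₂ * k₃) = F (k₁ * k₂) k₃ * F k₁ k₂)
    (Fh : K → K → A →* ℂˣ)
    (hFhn : ∀ k : K, Fh 1 k = 1 ∧ Fh k 1 = 1)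
    (hFh : ∀ (k₁ k₂ k₃ : K) (a : A),
      Fh k₂ k₃ a * Fh k₁ (k₂ * k₃) a = Fh (k₁ * k₂) k₃ a * Fh k₁ k₂ (k₃ • a))
 :
    (∀ (k : Fin 3 → K) (x₁ x₂ : K) (a₂ : A),
      deltaK (phiF2 F Fh) k x₁ (fun _ => (a₂, x₂)) =
        Fh (k 0) (k 1) (F (k 2) x₁ * (F (k 2) (x₁ * x₂))⁻¹)) ∧
    (∀ (k : Fin 3 → K) (x₁ x₂ : K) (a₂ : A),
      deltaG F (uC3 F Fh k) x₁ (fun _ => (a₂, x₂)) =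
        Fh (k 0) (k 1) (F (k 2) (x₁ * x₂) * (F (k 2) x₁)⁻¹)) ∧
    (deltaK (phiF2 F Fh) * fun k => deltaG F (uC3 F Fh k)) = 1 ∧
    (∀ (k : Fin 4 → K) (x : K) (e : Fin 0 → A × K),
      deltaK (uC3 F Fh) k x e = Fh (k 0) (k 1) (F (k 2) (k 3))) := by
  refine ⟨fun k x₁ x₂ a₂ => part1 F Fh hF hFh k x₁ x₂ a₂,
    fun k x₁ x₂ a₂ => part2 F Fh k x₁ x₂ a₂, ?_,
    fun k x e => part4 F Fh hF hFh k x e⟩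
  funext k x g
  have hg : g = fun _ => ((g 0).1, (g 0).2) := funext fun i => by
    fin_cases i; rfl
  show deltaK (phiF2 F Fh) k x g * deltaG F (uC3 F Fh k) x g = 1
  rw [hg, part1 F Fh hF hFh, part2 F Fh, ← map_mul]
  rw [show (F (k 2) x * (F (k 2) (x * (g 0).2))⁻¹) * (F (k 2) (x * (g 0).2) * (F (k 2) x)⁻¹)
      = 1 by group, map_one]
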